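/- arXiv:1407.0555 — 13 statements merged into one kernel-verified Lean document; each statement's English description precedes it below -/
import Mathlib

section
/- The billiard map invariant: if x_{j+1} = x_j - 2((A⁻¹x_j,y_j)/(A⁻¹y_j,y_j))·y_j and y_{j+1} = y_j + 2((A⁻¹x_{j+1},y_{j+1})/(EA⁻²x_{j+1},x_{j+1}))·EA⁻¹x_{j+1}, then (A⁻¹x_{j+1}, y_{j+1}) = (A⁻¹x_j, y_j). -/
open Finset

/-- The billiard map invariant: `(A⁻¹x_{j+1}, y_{j+1}) = (A⁻¹x_j, y_j)`. -/
theorem billiard_invariant_J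
    (n : ℕ) (a τ : Fin n → ℝ) (ha : ∀ i, a i ≠ 0)
    (hτ : ∀ i, τ i = 1 ∨ τ i = -1)
    (x y x' y' : Fin n → ℝ)
    (hx : ∑ i, x i * x i / a i = 1)
    (hx' : ∑ i, x' i * x' i / a i = 1)
    (hyy : ∑ i, y i * y i / a i ≠ 0)
    (hE : ∑ i, τ i * x' i * x' i / (a i * a i) ≠ 0)
    (hstep1 : ∀ i, x' i =
      x i - 2 * ((∑ j, x j * y j / a j) / (∑ j, y j * y j / a j)) * y i)
    (hstep2 : ∀ i, y' i =
      y i + 2 * ((∑ j, x' j * y' j / a j) / (∑ j, τ j * x' j * x' j / (a j * a j)))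
        * (τ i * x' i / a i)) :
    ∑ i, x' i * y' i / a i = ∑ i, x i * y i / a i := by
  set P := ∑ i, x i * y i / a i with hP
  set Q := ∑ i, y i * y i / a i with hQ
  set S := ∑ i, x' i * y' i / a i with hS
  set E := ∑ i, τ i * x' i * x' i / (a i * a i) with hEd
  have h1 : ∑ i, x' i * y i / a i = P - 2 * (P / Q) * Q := by
    rw [hP, hQ, Finset.mul_sum, ← Finset.sum_sub_distrib]
    exact Finset.sum_congr rfl fun i _ => by rw [hstep1 i]; ring
  have h2 : S = (∑ i, x' i * y i / a i) + 2 * (S / E) * E := by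
    conv_lhs => rw [hS]
    rw [Finset.mul_sum, ← Finset.sum_add_distrib]
    exact Finset.sum_congr rfl fun i _ => by rw [hstep2 i]; ring
  rw [mul_assoc, div_mul_cancel₀ _ hyy] at h1
  rw [mul_assoc, div_mul_cancel₀ _ hE] at h2
  rw [h1] at h2
  linarith
end

section
/- The billiard map preserves the pseudo-Euclidean kinetic energy: under the billiard mapping, ⟨y_{j+1}, y_{j+1}⟩ = ⟨y_j, y_j⟩. -/
open Finset

/-- The billiard map preserves the pseudo-Euclidean kinetic energy:
`⟨y_{j+1}, y_{j+1}⟩ = ⟨y_j, y_j⟩`. -/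
theorem billiard_preserves_energy
    (n : ℕ) (a τ : Fin n → ℝ) (ha : ∀ i, a i ≠ 0)
    (hτ : ∀ i, τ i = 1 ∨ τ i = -1)
    (x y x' y' : Fin n → ℝ)
    (hx : ∑ i, x i * x i / a i = 1)
    (hx' : ∑ i, x' i * x' i / a i = 1)
    (hyy : ∑ i, y i * y i / a i ≠ 0)
    (hE : ∑ i, τ i * x' i * x' i / (a i * a i) ≠ 0)
    (hstep1 : ∀ i, x' i =
      x i - 2 * ((∑ j, x j * y j / a j) / (∑ j, y j * y j / a j)) * y i)
    (hstep2 : ∀ i, y' i =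
      y i + 2 * ((∑ j, x' j * y' j / a j) / (∑ j, τ j * x' j * x' j / (a j * a j)))
        * (τ i * x' i / a i)) :
    ∑ i, τ i * y' i * y' i = ∑ i, τ i * y i * y i := by
  set P := ∑ j, x j * y j / a j with hP
  set Q := ∑ j, y j * y j / a j with hQ
  set D := ∑ j, τ j * x' j * x' j / (a j * a j) with hD
  set S := ∑ j, x' j * y' j / a j with hS
  -- Step A: ∑ x' y / a = -P
  have hA : ∑ i, x' i * y i / a i = -P := by
    have h1 : ∀ i ∈ Finset.univ (α := Fin n), x' i * y i / a i =
        x i * y i / a i - (2 * (P / Q)) * (y i * y i / a i) := by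
      intro i _; rw [hstep1 i]; ring
    rw [Finset.sum_congr rfl h1, Finset.sum_sub_distrib, ← Finset.mul_sum]
    rw [← hP, ← hQ]
    field_simp
    ring
  -- Step B: S = P
  have hB : S = P := by
    have h1 : ∀ i ∈ Finset.univ (α := Fin n), x' i * y' i / a i =
        x' i * y i / a i + (2 * (S / D)) * (τ i * x' i * x' i / (a i * a i)) := by
      intro i _; rw [hstep2 i]; have := ha i; field_simp
    have h2 : S = ∑ i, (x' i * y i / a i
        + (2 * (S / D)) * (τ i * x' i * x' i / (a i * a i))) :=
      hS.trans (Finset.sum_congr rfl h1)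
    rw [Finset.sum_add_distrib, ← Finset.mul_sum, hA, ← hD] at h2
    have h3 : 2 * (S / D) * D = 2 * S := by field_simp
    rw [h3] at h2
    linarith
  -- Final computation
  have hfin : ∀ i ∈ Finset.univ (α := Fin n), τ i * y' i * y' i =
      τ i * y i * y i + (2 * (2 * (P / D))) * (x' i * y i / a i)
        + ((2 * (P / D)) * (2 * (P / D))) * (τ i * x' i * x' i / (a i * a i)) := by
    intro i _
    rw [hstep2 i, hB]
    rcases hτ i with h | h <;> rw [h] <;> field_simp <;> ring
  rw [Finset.sum_congr rfl hfin, Finset.sum_add_distrib, Finset.sum_add_distrib,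
    ← Finset.mul_sum, ← Finset.mul_sum, hA, ← hD]
  have hz : 2 * (2 * (P / D)) * (-P) + 2 * (P / D) * (2 * (P / D)) * D = 0 := by
    field_simp
    ring
  linarith
end

section
/- Partial fraction decomposition of the spectral determinant: for a non-symmetric quadric (τ_i a_i pairwise distinct), q_λ(y,y)(1 + q_λ(x,x)) - q_λ(x,y)² = Σ_{i=1}^n f_i(x,y)/(λ - τ_i a_i), where f_i(x,y) = τ_i y_i² + Σ_{j≠i} (x_i y_j - x_j y_i)²/(τ_j a_i - τ_i a_j). -/
open Finset

/-- Swap the two summation indices in a sum over off-diagonal pairs. -/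
lemma sum_erase_swap {n : ℕ} (f : Fin n → Fin n → ℝ) :
    ∑ i, ∑ j ∈ univ.erase i, f i j = ∑ i, ∑ j ∈ univ.erase i, f j i := by
  rw [Finset.sum_comm' (s' := fun j => univ.erase j) (t' := univ)]
  simp [Finset.mem_erase, ne_comm]

set_option maxHeartbeats 1000000 in
/-- Key pointwise pair identity. -/
lemma pair_identity (ti tj ai aj lam xi xj yi yj : ℝ)
    (hti : ti = 1 ∨ ti = -1) (htj : tj = 1 ∨ tj = -1)
    (hp : lam - ti * ai ≠ 0) (hq : lam - tj * aj ≠ 0)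
    (hd : tj * ai - ti * aj ≠ 0) (hd' : ti * aj - tj * ai ≠ 0) :
    (ti * yi * yi / (lam - ti * ai)) * (tj * xj * xj / (lam - tj * aj)) -
      (ti * xi * yi / (lam - ti * ai)) * (tj * xj * yj / (lam - tj * aj)) +
    ((tj * yj * yj / (lam - tj * aj)) * (ti * xi * xi / (lam - ti * ai)) -
      (tj * xj * yj / (lam - tj * aj)) * (ti * xi * yi / (lam - ti * ai))) =
    (xi * yj - xj * yi) ^ 2 / (tj * ai - ti * aj) / (lam - ti * ai) +
      (xj * yi - xi * yj) ^ 2 / (ti * aj - tj * ai) / (lam - tj * aj) := by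
  rcases hti with h | h <;> rcases htj with h' | h' <;> subst h h' <;>
    simp only [one_mul, neg_mul, sub_neg_eq_add, neg_neg, neg_sub, neg_add] at hp hq hd hd' ⊢ <;>
    field_simp <;> ring

/-- Partial fraction decomposition of the spectral determinant for a
non-symmetric quadric:
`q_λ(y,y)(1 + q_λ(x,x)) - q_λ(x,y)² = Σ_i f_i(x,y)/(λ - τ_i a_i)`. -/
theorem spectral_det_partial_fractions
    (n : ℕ) (a τ : Fin n → ℝ) (ha : ∀ i, a i ≠ 0)
    (hτ : ∀ i, τ i = 1 ∨ τ i = -1)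
    (hdist : ∀ i j, i ≠ j → τ i * a i ≠ τ j * a j)
    (x y : Fin n → ℝ) (lam : ℝ) (hlam : ∀ i, lam ≠ τ i * a i) :
    (∑ i, τ i * y i * y i / (lam - τ i * a i)) *
        (1 + ∑ i, τ i * x i * x i / (lam - τ i * a i)) -
      (∑ i, τ i * x i * y i / (lam - τ i * a i)) ^ 2 =
    ∑ i, (τ i * y i ^ 2 +
        ∑ j ∈ univ.erase i, (x i * y j - x j * y i) ^ 2 / (τ j * a i - τ i * a j)) /
      (lam - τ i * a i) := by
  have hne : ∀ i, lam - τ i * a i ≠ 0 := fun i => sub_ne_zero.mpr (hlam i)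
  have hd : ∀ i j, i ≠ j → τ j * a i - τ i * a j ≠ 0 := by
    intro i j hij h
    apply hdist i j hij
    rcases hτ i with hi | hi <;> rcases hτ j with hj | hj <;>
      rw [hi, hj] at h ⊢ <;> linarith
  -- abbreviations for the summands
  set F : Fin n → Fin n → ℝ := fun i j =>
    (τ i * y i * y i / (lam - τ i * a i)) * (τ j * x j * x j / (lam - τ j * a j)) -
    (τ i * x i * y i / (lam - τ i * a i)) * (τ j * x j * y j / (lam - τ j * a j)) with hF
  set G : Fin n → Fin n → ℝ := fun i j =>
    (x i * y j - x j * y i) ^ 2 / (τ j * a i - τ i * a j) / (lam - τ i * a i) with hG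
  -- pointwise pair identity
  have key : ∀ i j : Fin n, i ≠ j → F i j + F j i = G i j + G j i := by
    intro i j hij
    simp only [hF, hG]
    exact pair_identity (τ i) (τ j) (a i) (a j) lam (x i) (x j) (y i) (y j)
      (hτ i) (hτ j) (hne i) (hne j) (hd i j hij) (hd j i hij.symm)
  -- the doubled sums agree
  have hdouble : ∑ i, ∑ j ∈ univ.erase i, F i j = ∑ i, ∑ j ∈ univ.erase i, G i j := by
    have hF2 : ∑ i, ∑ j ∈ univ.erase i, (F i j + F j i) =
        2 * ∑ i, ∑ j ∈ univ.erase i, F i j := by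
      simp only [Finset.sum_add_distrib]
      rw [sum_erase_swap F]; ring
    have hG2 : ∑ i, ∑ j ∈ univ.erase i, (G i j + G j i) =
        2 * ∑ i, ∑ j ∈ univ.erase i, G i j := by
      simp only [Finset.sum_add_distrib]
      rw [sum_erase_swap G]; ring
    have hFG : ∑ i, ∑ j ∈ univ.erase i, (F i j + F j i) =
        ∑ i, ∑ j ∈ univ.erase i, (G i j + G j i) := by
      refine Finset.sum_congr rfl fun i _ => Finset.sum_congr rfl fun j hj => ?_
      exact key i j (fun h => (Finset.mem_erase.mp hj).1 h.symm)
    have := hF2.symm.trans (hFG.trans hG2)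
    exact mul_left_cancel₀ two_ne_zero this
  -- expand the left-hand side
  have hlhs :
      (∑ i, τ i * y i * y i / (lam - τ i * a i)) *
          (1 + ∑ i, τ i * x i * x i / (lam - τ i * a i)) -
        (∑ i, τ i * x i * y i / (lam - τ i * a i)) ^ 2 =
      (∑ i, τ i * y i * y i / (lam - τ i * a i)) +
        ∑ i, ∑ j ∈ univ.erase i, F i j := by
    have expand :
        (∑ i, τ i * y i * y i / (lam - τ i * a i)) *
            (∑ i, τ i * x i * x i / (lam - τ i * a i)) -
          (∑ i, τ i * x i * y i / (lam - τ i * a i)) ^ 2 =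
        ∑ i, ∑ j, F i j := by
      rw [sq, Finset.sum_mul_sum, Finset.sum_mul_sum, ← Finset.sum_sub_distrib]
      refine Finset.sum_congr rfl fun i _ => ?_
      rw [← Finset.sum_sub_distrib]
    have diag : ∀ i : Fin n, F i i = 0 := by
      intro i; simp only [hF]; ring
    have split : ∑ i, ∑ j, F i j = ∑ i, ∑ j ∈ univ.erase i, F i j := by
      refine Finset.sum_congr rfl fun i _ => ?_
      rw [← Finset.add_sum_erase univ (F i) (Finset.mem_univ i), diag i, zero_add]
    rw [mul_add, mul_one, ← split, ← expand]; ring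
  -- expand the right-hand side
  have hrhs :
      ∑ i, (τ i * y i ^ 2 +
          ∑ j ∈ univ.erase i, (x i * y j - x j * y i) ^ 2 / (τ j * a i - τ i * a j)) /
        (lam - τ i * a i) =
      (∑ i, τ i * y i * y i / (lam - τ i * a i)) +
        ∑ i, ∑ j ∈ univ.erase i, G i j := by
    rw [← Finset.sum_add_distrib]
    refine Finset.sum_congr rfl fun i _ => ?_
    rw [add_div, Finset.sum_div]
    congr 1
    · ring
  rw [hlhs, hrhs, hdouble]
end

section
/- The sum of the integrals f_i recovers twice the Hamiltonian: Σ_{i=1}^n f_i(x,y) = ⟨y,y⟩ = Σ_{i=1}^n τ_i y_i², where f_i(x,y) = τ_i y_i² + Σ_{j≠i}(x_i y_j - x_j y_i)²/(τ_j a_i - τ_i a_j). -/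
open Finset

/-- The sum of the integrals `f_i` recovers twice the Hamiltonian:
`Σ_i f_i(x,y) = ⟨y,y⟩ = Σ_i τ_i y_i²`. -/
theorem sum_integrals_eq_hamiltonian
    (n : ℕ) (a τ : Fin n → ℝ) (ha : ∀ i, a i ≠ 0)
    (hτ : ∀ i, τ i = 1 ∨ τ i = -1)
    (hdist : ∀ i j, i ≠ j → τ i * a i ≠ τ j * a j)
    (x y : Fin n → ℝ) :
    ∑ i, (τ i * y i ^ 2 +
        ∑ j ∈ univ.erase i, (x i * y j - x j * y i) ^ 2 / (τ j * a i - τ i * a j)) =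
    ∑ i, τ i * y i ^ 2 := by
  set f : Fin n → Fin n → ℝ :=
    fun i j => (x i * y j - x j * y i) ^ 2 / (τ j * a i - τ i * a j) with hf
  have hanti : ∀ i j, f j i = -f i j := by
    intro i j
    simp only [hf]
    rw [show τ i * a j - τ j * a i = -(τ j * a i - τ i * a j) by ring, div_neg,
      show (x j * y i - x i * y j) ^ 2 = (x i * y j - x j * y i) ^ 2 by ring]
  have key : ∑ i, ∑ j ∈ univ.erase i, f i j = 0 := by
    have hswap : ∑ i, ∑ j ∈ univ.erase i, f i j = ∑ j, ∑ i ∈ univ.erase j, f i j :=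
      Finset.sum_comm' (by
        intro i j
        simp [Finset.mem_erase, eq_comm, and_comm])
    have : ∑ i, ∑ j ∈ univ.erase i, f i j = -∑ i, ∑ j ∈ univ.erase i, f i j := by
      nth_rewrite 1 [hswap]
      rw [← Finset.sum_neg_distrib]
      refine Finset.sum_congr rfl fun j _ => ?_
      rw [← Finset.sum_neg_distrib]
      exact Finset.sum_congr rfl fun i _ => hanti j i
    linarith
  rw [Finset.sum_add_distrib, key, add_zero]
end

section
/- The Lax equation for the geodesic flow: if ẋ = y and ẏ = μ·EA⁻¹x with μ = -(A⁻¹y,y)/(EA⁻²x,x), and (A⁻¹x,x) = 1, (A⁻¹x,y) = 0, then d/dt of the matrix L(λ) = [[q_λ(x,y), q_λ(y,y)], [-1 - q_λ(x,x), -q_λ(x,y)]] equals the commutator [L(λ), A(λ)] where A(λ) = [[0, μ/λ], [1, 0]]. -/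
open Finset

/-- The Lax equation `L̇(λ) = [L(λ), A(λ)]` for the geodesic flow on a quadric
in pseudo-Euclidean space. -/
theorem geodesic_lax_equation
    (n : ℕ) (a τ : Fin n → ℝ) (ha : ∀ i, a i ≠ 0)
    (hτ : ∀ i, τ i = 1 ∨ τ i = -1)
    (x y : ℝ → Fin n → ℝ) (μ : ℝ → ℝ)
    (hμ : ∀ t, μ t = -(∑ i, y t i * y t i / a i) /
      (∑ i, τ i * x t i * x t i / (a i * a i)))
    (hsing : ∀ t, ∑ i, τ i * x t i * x t i / (a i * a i) ≠ 0)
    (hc1 : ∀ t, ∑ i, x t i * x t i / a i = 1)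
    (hc2 : ∀ t, ∑ i, x t i * y t i / a i = 0)
    (hdx : ∀ t i, HasDerivAt (fun s => x s i) (y t i) t)
    (hdy : ∀ t i, HasDerivAt (fun s => y s i) (μ t * (τ i * x t i / a i)) t)
    (lam : ℝ) (hlam0 : lam ≠ 0) (hlam : ∀ i, lam ≠ τ i * a i)
    (L A : ℝ → Matrix (Fin 2) (Fin 2) ℝ)
    (hL : ∀ t, L t =
      !![∑ i, τ i * x t i * y t i / (lam - τ i * a i),
         ∑ i, τ i * y t i * y t i / (lam - τ i * a i);
         -1 - ∑ i, τ i * x t i * x t i / (lam - τ i * a i),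
         -∑ i, τ i * x t i * y t i / (lam - τ i * a i)])
    (hA : ∀ t, A t = !![0, μ t / lam; 1, 0]) :
    ∀ t (i j : Fin 2), HasDerivAt (fun s => L s i j) ((L t * A t - A t * L t) i j) t := by
  intro t i j
  have hc : ∀ i, lam - τ i * a i ≠ 0 := fun i => sub_ne_zero.2 (hlam i)
  -- derivative of q_xy
  have hPxy : HasDerivAt (fun s => ∑ i, τ i * x s i * y s i / (lam - τ i * a i))
      (∑ i, (τ i * y t i * y t i + τ i * x t i * (μ t * (τ i * x t i / a i))) /
        (lam - τ i * a i)) t :=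
    HasDerivAt.fun_sum fun i _ =>
      (((hdx t i).const_mul (τ i)).mul (hdy t i)).div_const _
  -- derivative of q_yy
  have hPyy : HasDerivAt (fun s => ∑ i, τ i * y s i * y s i / (lam - τ i * a i))
      (∑ i, (τ i * (μ t * (τ i * x t i / a i)) * y t i +
        τ i * y t i * (μ t * (τ i * x t i / a i))) / (lam - τ i * a i)) t :=
    HasDerivAt.fun_sum fun i _ =>
      (((hdy t i).const_mul (τ i)).mul (hdy t i)).div_const _
  -- derivative of q_xx
  have hPxx : HasDerivAt (fun s => ∑ i, τ i * x s i * x s i / (lam - τ i * a i))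
      (∑ i, (τ i * y t i * x t i + τ i * x t i * y t i) / (lam - τ i * a i)) t :=
    HasDerivAt.fun_sum fun i _ =>
      (((hdx t i).const_mul (τ i)).mul (hdx t i)).div_const _
  -- value identities
  have Exy : (∑ i, (τ i * y t i * y t i + τ i * x t i * (μ t * (τ i * x t i / a i))) /
        (lam - τ i * a i))
      = (∑ i, τ i * y t i * y t i / (lam - τ i * a i)) + μ t / lam
        + μ t / lam * ∑ i, τ i * x t i * x t i / (lam - τ i * a i) := by
    have key : ∀ i ∈ Finset.univ (α := Fin n),
        (τ i * y t i * y t i + τ i * x t i * (μ t * (τ i * x t i / a i))) /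
          (lam - τ i * a i)
        = τ i * y t i * y t i / (lam - τ i * a i)
          + μ t / lam * (x t i * x t i / a i)
          + μ t / lam * (τ i * x t i * x t i / (lam - τ i * a i)) := by
      intro i _
      have hci := hc i
      have hai := ha i
      rcases hτ i with h | h <;> rw [h] at hci ⊢ <;>
        simp only [one_mul, neg_one_mul, sub_neg_eq_add] at hci ⊢ <;>
        field_simp <;> ring
    rw [Finset.sum_congr rfl key, Finset.sum_add_distrib, Finset.sum_add_distrib,
      ← Finset.mul_sum, ← Finset.mul_sum, hc1 t, mul_one]
  have Eyy : (∑ i, (τ i * (μ t * (τ i * x t i / a i)) * y t i +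
        τ i * y t i * (μ t * (τ i * x t i / a i))) / (lam - τ i * a i))
      = 2 * (μ t / lam) * ∑ i, τ i * x t i * y t i / (lam - τ i * a i) := by
    have key : ∀ i ∈ Finset.univ (α := Fin n),
        (τ i * (μ t * (τ i * x t i / a i)) * y t i +
          τ i * y t i * (μ t * (τ i * x t i / a i))) / (lam - τ i * a i)
        = 2 * (μ t / lam) * (x t i * y t i / a i)
          + 2 * (μ t / lam) * (τ i * x t i * y t i / (lam - τ i * a i)) := by
      intro i _
      have hci := hc i
      have hai := ha i
      rcases hτ i with h | h <;> rw [h] at hci ⊢ <;>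
        simp only [one_mul, neg_one_mul, sub_neg_eq_add] at hci ⊢ <;>
        field_simp <;> ring
    rw [Finset.sum_congr rfl key, Finset.sum_add_distrib,
      ← Finset.mul_sum, ← Finset.mul_sum, hc2 t, mul_zero, zero_add]
  have Exx : (∑ i, (τ i * y t i * x t i + τ i * x t i * y t i) / (lam - τ i * a i))
      = 2 * ∑ i, τ i * x t i * y t i / (lam - τ i * a i) := by
    rw [Finset.mul_sum]
    refine Finset.sum_congr rfl fun i _ => ?_
    ring
  fin_cases i <;> fin_cases j <;>
    simp [hL, hA, Matrix.mul_apply, Fin.sum_univ_two]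
  · convert hPxy using 1
    rw [Exy]; ring
  · convert hPyy using 1
    rw [Eyy]; ring
  · convert (hasDerivAt_const t (-1 : ℝ)).sub hPxx using 1
    · rfl
    · rfl
    · rfl
    rw [Exx]; ring
  · convert hPxy.neg using 1
    · rfl
    · rfl
    · rfl
    rw [Exy]; ring
end

section
/- The determinant det L(λ) = q_λ(y,y)(1 + q_λ(x,x)) - q_λ(x,y)² is constant along the geodesic flow ẋ = y, ẏ = -((A⁻¹y,y)/(EA⁻²x,x))·EA⁻¹x on the quadric (A⁻¹x,x) = 1 with (A⁻¹x,y) = 0. -/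
open Finset

/-- `det L(λ) = q_λ(y,y)(1 + q_λ(x,x)) - q_λ(x,y)²` is constant along the
geodesic flow on the quadric. -/
theorem geodesic_detL_constant
    (n : ℕ) (a τ : Fin n → ℝ) (ha : ∀ i, a i ≠ 0)
    (hτ : ∀ i, τ i = 1 ∨ τ i = -1)
    (x y : ℝ → Fin n → ℝ) (μ : ℝ → ℝ)
    (hμ : ∀ t, μ t = -(∑ i, y t i * y t i / a i) /
      (∑ i, τ i * x t i * x t i / (a i * a i)))
    (hsing : ∀ t, ∑ i, τ i * x t i * x t i / (a i * a i) ≠ 0)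
    (hc1 : ∀ t, ∑ i, x t i * x t i / a i = 1)
    (hc2 : ∀ t, ∑ i, x t i * y t i / a i = 0)
    (hdx : ∀ t i, HasDerivAt (fun s => x s i) (y t i) t)
    (hdy : ∀ t i, HasDerivAt (fun s => y s i) (μ t * (τ i * x t i / a i)) t)
    (lam : ℝ) (hlam : ∀ i, lam ≠ τ i * a i) :
    ∀ t₁ t₂ : ℝ,
      (∑ i, τ i * y t₁ i * y t₁ i / (lam - τ i * a i)) *
          (1 + ∑ i, τ i * x t₁ i * x t₁ i / (lam - τ i * a i)) -
        (∑ i, τ i * x t₁ i * y t₁ i / (lam - τ i * a i)) ^ 2 =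
      (∑ i, τ i * y t₂ i * y t₂ i / (lam - τ i * a i)) *
          (1 + ∑ i, τ i * x t₂ i * x t₂ i / (lam - τ i * a i)) -
        (∑ i, τ i * x t₂ i * y t₂ i / (lam - τ i * a i)) ^ 2 := by
  have hD : ∀ i, lam - τ i * a i ≠ 0 := fun i => sub_ne_zero.mpr (hlam i)
  have hτ2 : ∀ i, τ i * τ i = 1 := fun i => by rcases hτ i with h | h <;> rw [h] <;> norm_num
  suffices h : ∀ t, HasDerivAt (fun s =>
      (∑ i, τ i * y s i * y s i / (lam - τ i * a i)) *
          (1 + ∑ i, τ i * x s i * x s i / (lam - τ i * a i)) -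
        (∑ i, τ i * x s i * y s i / (lam - τ i * a i)) ^ 2) 0 t by
    intro t₁ t₂
    exact is_const_of_deriv_eq_zero (fun t => (h t).differentiableAt)
      (fun t => (h t).deriv) t₁ t₂
  intro t
  have hQxx : HasDerivAt (fun s => ∑ i, τ i * x s i * x s i / (lam - τ i * a i))
      (∑ i, (τ i * y t i * x t i + τ i * x t i * y t i) / (lam - τ i * a i)) t :=
    HasDerivAt.fun_sum fun i _ => (((hdx t i).const_mul (τ i)).mul (hdx t i)).div_const _
  have hQxy : HasDerivAt (fun s => ∑ i, τ i * x s i * y s i / (lam - τ i * a i))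
      (∑ i, (τ i * y t i * y t i + τ i * x t i * (μ t * (τ i * x t i / a i))) /
        (lam - τ i * a i)) t :=
    HasDerivAt.fun_sum fun i _ => (((hdx t i).const_mul (τ i)).mul (hdy t i)).div_const _
  have hQyy : HasDerivAt (fun s => ∑ i, τ i * y s i * y s i / (lam - τ i * a i))
      (∑ i, (τ i * (μ t * (τ i * x t i / a i)) * y t i +
        τ i * y t i * (μ t * (τ i * x t i / a i))) / (lam - τ i * a i)) t :=
    HasDerivAt.fun_sum fun i _ => (((hdy t i).const_mul (τ i)).mul (hdy t i)).div_const _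
  have hd := (hQyy.mul (hQxx.const_add 1)).sub (hQxy.pow 2)
  refine hd.congr_deriv (Eq.symm ?_)
  -- now prove 0 = derivative expression
  symm
  have h1 : (∑ i, (τ i * y t i * x t i + τ i * x t i * y t i) / (lam - τ i * a i))
      = 2 * ∑ i, τ i * x t i * y t i / (lam - τ i * a i) := by
    rw [Finset.mul_sum]
    refine Finset.sum_congr rfl fun i _ => ?_
    field_simp
    ring
  have h2 : (∑ i, (τ i * y t i * y t i + τ i * x t i * (μ t * (τ i * x t i / a i))) /
      (lam - τ i * a i))
      = (∑ i, τ i * y t i * y t i / (lam - τ i * a i)) +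
        μ t * ∑ i, x t i * x t i / (a i * (lam - τ i * a i)) := by
    rw [Finset.mul_sum, ← Finset.sum_add_distrib]
    refine Finset.sum_congr rfl fun i _ => ?_
    have hAi := ha i; have hDi := hD i
    rcases hτ i with h | h <;> rw [h] <;> field_simp <;> ring
  have h3 : (∑ i, (τ i * (μ t * (τ i * x t i / a i)) * y t i +
      τ i * y t i * (μ t * (τ i * x t i / a i))) / (lam - τ i * a i))
      = 2 * μ t * ∑ i, x t i * y t i / (a i * (lam - τ i * a i)) := by
    rw [Finset.mul_sum]
    refine Finset.sum_congr rfl fun i _ => ?_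
    rcases hτ i with h | h <;> rw [h] <;> field_simp <;> ring
  have h4 : lam * (∑ i, x t i * x t i / (a i * (lam - τ i * a i)))
      = 1 + ∑ i, τ i * x t i * x t i / (lam - τ i * a i) := by
    have : lam * (∑ i, x t i * x t i / (a i * (lam - τ i * a i)))
        = (∑ i, x t i * x t i / a i) +
          ∑ i, τ i * x t i * x t i / (lam - τ i * a i) := by
      rw [Finset.mul_sum, ← Finset.sum_add_distrib]
      refine Finset.sum_congr rfl fun i _ => ?_
      field_simp [ha i, hD i, show lam - a i * τ i ≠ 0 by rw [mul_comm]; exact hD i]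
      ring
    rw [this, hc1 t]
  have h5 : lam * (∑ i, x t i * y t i / (a i * (lam - τ i * a i)))
      = ∑ i, τ i * x t i * y t i / (lam - τ i * a i) := by
    have : lam * (∑ i, x t i * y t i / (a i * (lam - τ i * a i)))
        = (∑ i, x t i * y t i / a i) +
          ∑ i, τ i * x t i * y t i / (lam - τ i * a i) := by
      rw [Finset.mul_sum, ← Finset.sum_add_distrib]
      refine Finset.sum_congr rfl fun i _ => ?_
      field_simp [ha i, hD i, show lam - a i * τ i ≠ 0 by rw [mul_comm]; exact hD i]
      ring
    rw [this, hc2 t, zero_add]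
  rw [h1, h2, h3]
  set q1 := ∑ i, τ i * x t i * x t i / (lam - τ i * a i) with hq1
  set q2 := ∑ i, τ i * x t i * y t i / (lam - τ i * a i) with hq2
  set q3 := ∑ i, τ i * y t i * y t i / (lam - τ i * a i) with hq3
  set s1 := ∑ i, x t i * x t i / (a i * (lam - τ i * a i)) with hs1
  set s2 := ∑ i, x t i * y t i / (a i * (lam - τ i * a i)) with hs2
  have h6 : s2 * (1 + q1) = q2 * s1 := by
    rcases eq_or_ne lam 0 with h0 | h0
    · have e1 : (1 : ℝ) + q1 = 0 := by rw [← h4, h0, zero_mul]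
      have e2 : q2 = 0 := by rw [← h5, h0, zero_mul]
      rw [e1, e2]; ring
    · refine mul_left_cancel₀ h0 ?_
      linear_combination (1 + q1) * h5 - q2 * h4
  linear_combination (2 * μ t) * h6
end

section
/- The discrete Lax equation for the billiard: for trajectories of the billiard map, L_{x_{j+1},y_{j+1}}(λ) = A_j(λ) L_{x_j,y_j}(λ) A_j(λ)⁻¹, where L_{x,y}(λ) = [[q_λ(x,y), q_λ(y,y)], [-1-q_λ(x,x), -q_λ(x,y)]] and A_j(λ) = [[I_j λ + 2 J_j ν_j, -I_j ν_j], [-2 J_j λ, I_j λ]], with J_j = (A⁻¹x_j,y_j), I_j = -(A⁻¹y_j,y_j), ν_j = 2J_j/(EA⁻²x_{j+1},x_{j+1}). -/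
open Finset


theorem billiard_aux (I J ν lam Q1 Q2 Q3 : ℝ) (hI0 : I ≠ 0) (hlam0 : lam ≠ 0) :
    (!![(Q2 + 2*J/I*Q3) + ν/lam*(1 + (Q1 + 2*(2*J/I)*Q2 + (2*J/I)^2*Q3)),
        Q3 + 2*ν/lam*(Q2 + 2*J/I*Q3) + ν^2/lam^2*(1 + (Q1 + 2*(2*J/I)*Q2 + (2*J/I)^2*Q3));
        -1 - (Q1 + 2*(2*J/I)*Q2 + (2*J/I)^2*Q3),
        -((Q2 + 2*J/I*Q3) + ν/lam*(1 + (Q1 + 2*(2*J/I)*Q2 + (2*J/I)^2*Q3)))] : Matrix (Fin 2) (Fin 2) ℝ)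
      * !![I * lam + 2 * J * ν, -I * ν; -2 * J * lam, I * lam]
    = !![I * lam + 2 * J * ν, -I * ν; -2 * J * lam, I * lam] * !![Q2, Q3; -1 - Q1, -Q2] := by
  ext i j
  fin_cases i <;> fin_cases j <;>
    simp [Matrix.mul_apply, Fin.sum_univ_two] <;>
    field_simp <;> ring

set_option maxHeartbeats 2000000 in
/-- The discrete Lax equation for the billiard map:
`L_{x_{j+1},y_{j+1}}(λ) = A_j(λ) L_{x_j,y_j}(λ) A_j(λ)⁻¹`. -/
theorem billiard_discrete_lax
    (n : ℕ) (a τ : Fin n → ℝ) (ha : ∀ i, a i ≠ 0)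
    (hτ : ∀ i, τ i = 1 ∨ τ i = -1)
    (x y x' y' : Fin n → ℝ)
    (hx : ∑ i, x i * x i / a i = 1)
    (hx' : ∑ i, x' i * x' i / a i = 1)
    (J I ν : ℝ)
    (hJ : J = ∑ i, x i * y i / a i) (hJ0 : J ≠ 0)
    (hI : I = -∑ i, y i * y i / a i) (hI0 : I ≠ 0)
    (hD : ∑ i, τ i * x' i * x' i / (a i * a i) ≠ 0)
    (hν : ν = 2 * J / (∑ i, τ i * x' i * x' i / (a i * a i)))
    (hstep1 : ∀ i, x' i = x i - 2 * (J / (∑ j, y j * y j / a j)) * y i)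
    (hstep2 : ∀ i, y' i = y i + ν * (τ i * x' i / a i))
    (lam : ℝ) (hlam0 : lam ≠ 0) (hlam : ∀ i, lam ≠ τ i * a i)
    (q : (Fin n → ℝ) → (Fin n → ℝ) → ℝ)
    (hq : ∀ u v, q u v = ∑ i, τ i * u i * v i / (lam - τ i * a i))
    (L L' A : Matrix (Fin 2) (Fin 2) ℝ)
    (hL : L = !![q x y, q y y; -1 - q x x, -q x y])
    (hL' : L' = !![q x' y', q y' y'; -1 - q x' x', -q x' y'])
    (hA : A = !![I * lam + 2 * J * ν, -I * ν; -2 * J * lam, I * lam])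
    (hAdet : A.det ≠ 0) :
    L' = A * L * A⁻¹ := by
  have hS : (∑ j, y j * y j / a j) = -I := by rw [hI, neg_neg]
  have hstep1' : ∀ i, x' i = x i + (2 * J / I) * y i := by
    intro i
    rw [hstep1 i, hS]
    field_simp [hI0]
    ring
  have hd : ∀ i, lam - τ i * a i ≠ 0 := fun i => sub_ne_zero_of_ne (hlam i)
  have hQxx' : q x' x' = q x x + 2 * (2 * J / I) * q x y + (2 * J / I)^2 * q y y := by
    simp only [hq]
    calc ∑ i, τ i * x' i * x' i / (lam - τ i * a i)
        = ∑ i, (τ i * x i * x i / (lam - τ i * a i)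
            + 2 * (2 * J / I) * (τ i * x i * y i / (lam - τ i * a i))
            + (2 * J / I)^2 * (τ i * y i * y i / (lam - τ i * a i))) := by
          refine Finset.sum_congr rfl fun i _ => ?_
          rw [hstep1' i]; ring
      _ = _ := by
          rw [Finset.sum_add_distrib, Finset.sum_add_distrib, ← Finset.mul_sum,
            ← Finset.mul_sum]
  have hQx'y : q x' y = q x y + (2 * J / I) * q y y := by
    simp only [hq]
    calc ∑ i, τ i * x' i * y i / (lam - τ i * a i)
        = ∑ i, (τ i * x i * y i / (lam - τ i * a i)
            + (2 * J / I) * (τ i * y i * y i / (lam - τ i * a i))) := by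
          refine Finset.sum_congr rfl fun i _ => ?_
          rw [hstep1' i]; ring
      _ = _ := by rw [Finset.sum_add_distrib, ← Finset.mul_sum]
  have hPxy' : (∑ i, x' i * y i / a i) = -J := by
    calc ∑ i, x' i * y i / a i
        = ∑ i, (x i * y i / a i + (2 * J / I) * (y i * y i / a i)) := by
          refine Finset.sum_congr rfl fun i _ => ?_
          rw [hstep1' i]; ring
      _ = (∑ i, x i * y i / a i) + (2 * J / I) * ∑ i, y i * y i / a i := by
          rw [Finset.sum_add_distrib, ← Finset.mul_sum]
      _ = J + (2 * J / I) * (-I) := by rw [← hJ, hS]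
      _ = -J := by field_simp; ring
  have key1 : ∀ i, τ i * x' i * y' i / (lam - τ i * a i)
      = τ i * x' i * y i / (lam - τ i * a i)
        + ν / lam * (x' i * x' i / a i + τ i * x' i * x' i / (lam - τ i * a i)) := by
    intro i
    rw [hstep2 i]
    rcases hτ i with h | h
    · have hdi : lam - a i ≠ 0 := by simpa [h] using hd i
      simp only [h, one_mul]
      field_simp [ha i, hdi, hlam0]
      ring
    · have hdi : lam + a i ≠ 0 := by
        have := hd i; rw [h] at this; simpa [sub_neg_eq_add] using this
      simp only [h, neg_one_mul, sub_neg_eq_add]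
      field_simp [ha i, hdi, hlam0]
      ring
  have pf1 : ∀ i, x' i * x' i / (a i * (lam - τ i * a i))
      = 1 / lam * (x' i * x' i / a i + τ i * x' i * x' i / (lam - τ i * a i)) := by
    intro i
    rcases hτ i with h | h
    · have hdi : lam - a i ≠ 0 := by simpa [h] using hd i
      simp only [h, one_mul]
      field_simp [ha i, hdi, hlam0]
      ring
    · have hdi : lam + a i ≠ 0 := by
        have := hd i; rw [h] at this; simpa [sub_neg_eq_add] using this
      simp only [h, neg_one_mul, sub_neg_eq_add]
      field_simp [ha i, hdi, hlam0]
      ring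
  have pf3 : ∀ i, x' i * y i / (a i * (lam - τ i * a i))
      = 1 / lam * (x' i * y i / a i + τ i * x' i * y i / (lam - τ i * a i)) := by
    intro i
    rcases hτ i with h | h
    · have hdi : lam - a i ≠ 0 := by simpa [h] using hd i
      simp only [h, one_mul]
      field_simp [ha i, hdi, hlam0]
      ring
    · have hdi : lam + a i ≠ 0 := by
        have := hd i; rw [h] at this; simpa [sub_neg_eq_add] using this
      simp only [h, neg_one_mul, sub_neg_eq_add]
      field_simp [ha i, hdi, hlam0]
      ring
  have pf2 : ∀ i, τ i * x' i * x' i / (a i * a i * (lam - τ i * a i))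
      = 1 / lam * (τ i * x' i * x' i / (a i * a i))
        + 1 / lam * (x' i * x' i / (a i * (lam - τ i * a i))) := by
    intro i
    rcases hτ i with h | h
    · have hdi : lam - a i ≠ 0 := by simpa [h] using hd i
      simp only [h, one_mul]
      field_simp [ha i, hdi, hlam0]
      ring
    · have hdi : lam + a i ≠ 0 := by
        have := hd i; rw [h] at this; simpa [sub_neg_eq_add] using this
      simp only [h, neg_one_mul, sub_neg_eq_add]
      field_simp [ha i, hdi, hlam0]
      ring
  have expy : ∀ i, τ i * y' i * y' i / (lam - τ i * a i)
      = τ i * y i * y i / (lam - τ i * a i)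
        + 2 * ν * (x' i * y i / (a i * (lam - τ i * a i)))
        + ν^2 * (τ i * x' i * x' i / (a i * a i * (lam - τ i * a i))) := by
    intro i
    rw [hstep2 i]
    rcases hτ i with h | h
    · have hdi : lam - a i ≠ 0 := by simpa [h] using hd i
      simp only [h, one_mul]
      field_simp [ha i, hdi, hlam0]
      ring
    · have hdi : lam + a i ≠ 0 := by
        have := hd i; rw [h] at this; simpa [sub_neg_eq_add] using this
      simp only [h, neg_one_mul, sub_neg_eq_add]
      field_simp [ha i, hdi, hlam0]
      ring
  have key2 : ∀ i, τ i * y' i * y' i / (lam - τ i * a i)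
      = τ i * y i * y i / (lam - τ i * a i)
        + 2 * ν / lam * (x' i * y i / a i + τ i * x' i * y i / (lam - τ i * a i))
        + ν^2 / lam * (τ i * x' i * x' i / (a i * a i))
        + ν^2 / lam^2 * (x' i * x' i / a i + τ i * x' i * x' i / (lam - τ i * a i)) := by
    intro i
    rw [expy i, pf3 i, pf2 i, pf1 i]
    ring
  have hQ2' : q x' y' = q x' y + ν / lam * (1 + q x' x') := by
    simp only [hq]
    calc ∑ i, τ i * x' i * y' i / (lam - τ i * a i)
        = ∑ i, (τ i * x' i * y i / (lam - τ i * a i)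
            + ν / lam * (x' i * x' i / a i + τ i * x' i * x' i / (lam - τ i * a i))) :=
          Finset.sum_congr rfl fun i _ => key1 i
      _ = (∑ i, τ i * x' i * y i / (lam - τ i * a i))
            + ν / lam * ((∑ i, x' i * x' i / a i)
              + ∑ i, τ i * x' i * x' i / (lam - τ i * a i)) := by
          rw [Finset.sum_add_distrib, ← Finset.mul_sum, Finset.sum_add_distrib]
      _ = _ := by rw [hx']
  have hνD : ν * (∑ i, τ i * x' i * x' i / (a i * a i)) = 2 * J := by
    rw [hν]; exact div_mul_cancel₀ _ hD
  have hQ3' : q y' y' = q y y + 2 * ν / lam * (-J + q x' y)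
      + ν^2 / lam * (∑ i, τ i * x' i * x' i / (a i * a i))
      + ν^2 / lam^2 * (1 + q x' x') := by
    simp only [hq]
    calc ∑ i, τ i * y' i * y' i / (lam - τ i * a i)
        = ∑ i, (τ i * y i * y i / (lam - τ i * a i)
            + 2 * ν / lam * (x' i * y i / a i + τ i * x' i * y i / (lam - τ i * a i))
            + ν^2 / lam * (τ i * x' i * x' i / (a i * a i))
            + ν^2 / lam^2 * (x' i * x' i / a i + τ i * x' i * x' i / (lam - τ i * a i))) :=
          Finset.sum_congr rfl fun i _ => key2 i
      _ = (∑ i, τ i * y i * y i / (lam - τ i * a i))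
            + 2 * ν / lam * ((∑ i, x' i * y i / a i)
              + ∑ i, τ i * x' i * y i / (lam - τ i * a i))
            + ν^2 / lam * (∑ i, τ i * x' i * x' i / (a i * a i))
            + ν^2 / lam^2 * ((∑ i, x' i * x' i / a i)
              + ∑ i, τ i * x' i * x' i / (lam - τ i * a i)) := by
          rw [Finset.sum_add_distrib, Finset.sum_add_distrib, Finset.sum_add_distrib,
            ← Finset.mul_sum, ← Finset.mul_sum, ← Finset.mul_sum,
            Finset.sum_add_distrib, Finset.sum_add_distrib]
      _ = _ := by rw [hx', hPxy']
  have hQ3'' : q y' y' = q y y + 2 * ν / lam * (q x' y) + ν^2 / lam^2 * (1 + q x' x') := by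
    linear_combination hQ3' + (ν / lam) * hνD
  -- closed forms
  have e3 : q x' x' = q x x + 2*(2*J/I)*(q x y) + (2*J/I)^2*(q y y) := hQxx'
  have e1 : q x' y' = (q x y + 2*J/I*(q y y))
      + ν/lam*(1 + (q x x + 2*(2*J/I)*(q x y) + (2*J/I)^2*(q y y))) := by
    rw [hQ2', hQx'y, hQxx']
  have e2 : q y' y' = q y y + 2*ν/lam*(q x y + 2*J/I*(q y y))
      + ν^2/lam^2*(1 + (q x x + 2*(2*J/I)*(q x y) + (2*J/I)^2*(q y y))) := by
    rw [hQ3'', hQx'y, hQxx']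
  have key : L' * A = A * L := by
    rw [hL, hL', hA, e1, e2, e3]
    exact billiard_aux I J ν lam (q x x) (q x y) (q y y) hI0 hlam0
  have hu : IsUnit A.det := isUnit_iff_ne_zero.mpr hAdet
  calc L' = L' * (A * A⁻¹) := by rw [Matrix.mul_nonsing_inv A hu, Matrix.mul_one]
    _ = (L' * A) * A⁻¹ := by rw [Matrix.mul_assoc]
    _ = A * L * A⁻¹ := by rw [key]
end

section
/- As a corollary of the discrete Lax representation, det L_{x,y}(λ) = q_λ(y,y)(1+q_λ(x,x)) - q_λ(x,y)² is an invariant of the billiard map: det L_{x_{j+1},y_{j+1}}(λ) = det L_{x_j,y_j}(λ) for all admissible λ. -/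
open Finset

set_option maxHeartbeats 1600000

/-- `det L_{x,y}(λ) = q_λ(y,y)(1+q_λ(x,x)) - q_λ(x,y)²` is an invariant of the
billiard map, for all admissible `λ`. -/
theorem billiard_detL_invariant
    (n : ℕ) (a τ : Fin n → ℝ) (ha : ∀ i, a i ≠ 0)
    (hτ : ∀ i, τ i = 1 ∨ τ i = -1)
    (x y x' y' : Fin n → ℝ)
    (hx : ∑ i, x i * x i / a i = 1)
    (hx' : ∑ i, x' i * x' i / a i = 1)
    (hyy : ∑ i, y i * y i / a i ≠ 0)
    (hE : ∑ i, τ i * x' i * x' i / (a i * a i) ≠ 0)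
    (hstep1 : ∀ i, x' i =
      x i - 2 * ((∑ j, x j * y j / a j) / (∑ j, y j * y j / a j)) * y i)
    (hstep2 : ∀ i, y' i =
      y i + 2 * ((∑ j, x' j * y' j / a j) / (∑ j, τ j * x' j * x' j / (a j * a j)))
        * (τ i * x' i / a i)) :
    ∀ lam : ℝ, (∀ i, lam ≠ τ i * a i) →
      (∑ i, τ i * y' i * y' i / (lam - τ i * a i)) *
          (1 + ∑ i, τ i * x' i * x' i / (lam - τ i * a i)) -
        (∑ i, τ i * x' i * y' i / (lam - τ i * a i)) ^ 2 =
      (∑ i, τ i * y i * y i / (lam - τ i * a i)) *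
          (1 + ∑ i, τ i * x i * x i / (lam - τ i * a i)) -
        (∑ i, τ i * x i * y i / (lam - τ i * a i)) ^ 2 := by
  intro lam hlam
  have hD : ∀ i, lam - τ i * a i ≠ 0 := fun i => sub_ne_zero_of_ne (hlam i)
  -- helpers for splitting sums
  have key : ∀ (F G H K : Fin n → ℝ) (p q r : ℝ),
      (∀ i, K i = p * F i + q * G i + r * H i) →
      ∑ i, K i = p * ∑ i, F i + q * ∑ i, G i + r * ∑ i, H i := by
    intro F G H K p q r hpt
    rw [Finset.mul_sum, Finset.mul_sum, Finset.mul_sum, ← Finset.sum_add_distrib,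
      ← Finset.sum_add_distrib]
    exact Finset.sum_congr rfl fun i _ => hpt i
  have key2 : ∀ (F G K : Fin n → ℝ) (p : ℝ),
      (∀ i, p * K i = F i + G i) →
      p * ∑ i, K i = (∑ i, F i) + ∑ i, G i := by
    intro F G K p hpt
    rw [Finset.mul_sum, ← Finset.sum_add_distrib]
    exact Finset.sum_congr rfl fun i _ => hpt i
  -- scalar abbreviations
  set c : ℝ := (∑ j, x j * y j / a j) / (∑ j, y j * y j / a j) with hc
  set T : ℝ := ∑ j, x' j * y' j / a j with hTdef
  set S : ℝ := ∑ j, τ j * x' j * x' j / (a j * a j) with hSdef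
  set d : ℝ := T / S with hddef
  set u' : ℝ := ∑ j, x' j * y j / a j with hu'def
  clear_value c T S d u'
  have hSne : S ≠ 0 := hE
  have hTeq : T = u' + 2 * d * S := by
    rw [hTdef, hu'def, hSdef, Finset.mul_sum, ← Finset.sum_add_distrib]
    exact Finset.sum_congr rfl fun i _ => by rw [hstep2 i]; ring
  have hdS : d * S = T := by rw [hddef]; exact div_mul_cancel₀ T hSne
  have hTu : T = -u' := by linear_combination -hTeq - 2 * hdS
  -- lam-dependent sums
  set qxx : ℝ := ∑ i, τ i * x i * x i / (lam - τ i * a i) with hqxx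
  set qxy : ℝ := ∑ i, τ i * x i * y i / (lam - τ i * a i) with hqxy
  set qyy : ℝ := ∑ i, τ i * y i * y i / (lam - τ i * a i) with hqyy
  set qXX : ℝ := ∑ i, τ i * x' i * x' i / (lam - τ i * a i) with hqXX
  set qXY : ℝ := ∑ i, τ i * x' i * y i / (lam - τ i * a i) with hqXY
  set qXYp : ℝ := ∑ i, τ i * x' i * y' i / (lam - τ i * a i) with hqXYp
  set qYY : ℝ := ∑ i, τ i * y' i * y' i / (lam - τ i * a i) with hqYY
  set B : ℝ := ∑ i, x' i * y i / (a i * (lam - τ i * a i)) with hB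
  set C : ℝ := ∑ i, x' i * x' i / (a i * (lam - τ i * a i)) with hCdef
  set Gg : ℝ := ∑ i, τ i * x' i * x' i / (a i * a i * (lam - τ i * a i)) with hGdef
  clear_value qxx qxy qyy qXX qXY qXYp qYY B C Gg
  have e1 : qXX = 1 * qxx + (-(4 * c)) * qxy + (4 * c ^ 2) * qyy := by
    rw [hqXX, hqxx, hqxy, hqyy]
    exact key _ _ _ _ _ _ _ fun i => by rw [hstep1 i]; ring
  have e2 : qXY = 1 * qxy + (-(2 * c)) * qyy + 0 * qyy := by
    rw [hqXY, hqxy, hqyy]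
    exact key _ _ _ _ _ _ _ fun i => by rw [hstep1 i]; ring
  have e3 : qYY = 1 * qyy + (4 * d) * B + (4 * d ^ 2) * Gg := by
    rw [hqYY, hqyy, hB, hGdef]
    refine key _ _ _ _ _ _ _ fun i => ?_
    have h1 := hD i
    have h2 := ha i
    rw [hstep2 i]
    rcases hτ i with h | h <;> rw [h] at h1 ⊢ <;>
      simp only [one_mul, neg_one_mul, sub_neg_eq_add] at h1 ⊢ <;> field_simp [h1, h2] <;> ring
  have e4 : qXYp = 1 * qXY + (2 * d) * C + 0 * C := by
    rw [hqXYp, hqXY, hCdef]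
    refine key _ _ _ _ _ _ _ fun i => ?_
    have h1 := hD i
    have h2 := ha i
    rw [hstep2 i]
    rcases hτ i with h | h <;> rw [h] at h1 ⊢ <;>
      simp only [one_mul, neg_one_mul, sub_neg_eq_add] at h1 ⊢ <;> field_simp [h1, h2] <;> ring
  set Bp : ℝ := ∑ i, x' i * y' i / (a i * (lam - τ i * a i)) with hBp
  clear_value Bp
  have e5 : lam * B = u' + qXY := by
    rw [hB, hu'def, hqXY]
    refine key2 _ _ _ _ fun i => ?_
    have h1 := hD i
    have h2 := ha i
    rw [div_add_div _ _ h2 h1, mul_div_assoc', div_eq_div_iff (mul_ne_zero h2 h1) (mul_ne_zero h2 h1)]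
    ring
  have e6 : lam * C = (∑ i, x' i * x' i / a i) + qXX := by
    rw [hCdef, hqXX]
    refine key2 _ _ _ _ fun i => ?_
    have h1 := hD i
    have h2 := ha i
    rw [div_add_div _ _ h2 h1, mul_div_assoc', div_eq_div_iff (mul_ne_zero h2 h1) (mul_ne_zero h2 h1)]
    ring
  rw [hx'] at e6
  have e7 : lam * Gg = S + C := by
    rw [hGdef, hSdef, hCdef]
    refine key2 _ _ _ _ fun i => ?_
    have h1 := hD i
    have h2 := ha i
    rcases hτ i with h | h <;> rw [h] at h1 ⊢ <;>
      simp only [one_mul, neg_one_mul, sub_neg_eq_add] at h1 ⊢ <;> field_simp [h1, h2] <;> ring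
  have e8 : lam * Bp = T + qXYp := by
    rw [hBp, hTdef, hqXYp]
    refine key2 _ _ _ _ fun i => ?_
    have h1 := hD i
    have h2 := ha i
    rw [div_add_div _ _ h2 h1, mul_div_assoc', div_eq_div_iff (mul_ne_zero h2 h1) (mul_ne_zero h2 h1)]
    ring
  have step2 : qYY * (1 + qXX) - qXYp ^ 2 = qyy * (1 + qXX) - qXY ^ 2 := by
    by_cases hl : lam = 0
    · rw [hl] at e5 e6 e8
      have z1 : qXX = -1 := by linear_combination -e6
      have z2 : qXY = -u' := by linear_combination -e5
      have z3 : qXYp = -T := by linear_combination -e8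
      rw [z1, z2, z3, hTu]; ring
    · have Bv : B = (u' + qXY) / lam := by
        rw [eq_div_iff hl]; linear_combination e5
      have Cv : C = (1 + qXX) / lam := by
        rw [eq_div_iff hl]; linear_combination e6
      have Gv : Gg = (S + C) / lam := by
        rw [eq_div_iff hl]; linear_combination e7
      have hu'd : u' = -(d * S) := by linear_combination hTu + hdS
      rw [e3, e4, Bv, Gv, Cv, hu'd]
      field_simp
      ring
  rw [step2, e1, e2]; ring
end

section
/- The momentum map components Φ_{s,ij} = y_i x_j - x_i y_j for i,j ∈ I_s are integrals of the billiard map: if (x', y') is the billiard image of (x, y), then y'_i x'_j - x'_i y'_j = y_i x_j - x_i y_j for all i, j in the same symmetry block I_s. -/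
open Finset

/-- The momentum map components `Φ_{s,ij} = y_i x_j - x_i y_j` (for `i, j` in
the same symmetry block, i.e. `a_i = a_j`, `τ_i = τ_j`) are integrals of the
billiard map. -/
theorem billiard_momentum_invariant
    (n : ℕ) (a τ : Fin n → ℝ) (ha : ∀ i, a i ≠ 0)
    (hτ : ∀ i, τ i = 1 ∨ τ i = -1)
    (x y x' y' : Fin n → ℝ)
    (hx : ∑ i, x i * x i / a i = 1)
    (hx' : ∑ i, x' i * x' i / a i = 1)
    (hyy : ∑ i, y i * y i / a i ≠ 0)
    (hE : ∑ i, τ i * x' i * x' i / (a i * a i) ≠ 0)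
    (hstep1 : ∀ i, x' i =
      x i - 2 * ((∑ j, x j * y j / a j) / (∑ j, y j * y j / a j)) * y i)
    (hstep2 : ∀ i, y' i =
      y i + 2 * ((∑ j, x' j * y' j / a j) / (∑ j, τ j * x' j * x' j / (a j * a j)))
        * (τ i * x' i / a i))
    (i j : Fin n) (haij : a i = a j) (hτij : τ i = τ j) :
    y' i * x' j - x' i * y' j = y i * x j - x i * y j := by
  rw [hstep2 i, hstep2 j, ← haij, ← hτij, hstep1 i, hstep1 j]
  ring
end

section
/- The functions Φ_{s,ij} = y_i x_j - x_i y_j (i, j ∈ I_s) are constant along the geodesic flow ẋ = y, ẏ = -((A⁻¹y,y)/(EA⁻²x,x))EA⁻¹x on a symmetric quadric, provided a_i = a_j and τ_i = τ_j for i, j ∈ I_s. -/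
open Finset

/-- The functions `Φ_{s,ij} = y_i x_j - x_i y_j` (for `i, j` in the same
symmetry block) are constant along the geodesic flow on a symmetric quadric. -/
theorem geodesic_momentum_invariant
    (n : ℕ) (a τ : Fin n → ℝ) (ha : ∀ i, a i ≠ 0)
    (hτ : ∀ i, τ i = 1 ∨ τ i = -1)
    (x y : ℝ → Fin n → ℝ) (μ : ℝ → ℝ)
    (hμ : ∀ t, μ t = -(∑ i, y t i * y t i / a i) /
      (∑ i, τ i * x t i * x t i / (a i * a i)))
    (hsing : ∀ t, ∑ i, τ i * x t i * x t i / (a i * a i) ≠ 0)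
    (hc1 : ∀ t, ∑ i, x t i * x t i / a i = 1)
    (hc2 : ∀ t, ∑ i, x t i * y t i / a i = 0)
    (hdx : ∀ t i, HasDerivAt (fun s => x s i) (y t i) t)
    (hdy : ∀ t i, HasDerivAt (fun s => y s i) (μ t * (τ i * x t i / a i)) t)
    (i j : Fin n) (haij : a i = a j) (hτij : τ i = τ j) :
    ∀ t₁ t₂ : ℝ,
      y t₁ i * x t₁ j - x t₁ i * y t₁ j = y t₂ i * x t₂ j - x t₂ i * y t₂ j := by
  intro t₁ t₂
  have key : ∀ t : ℝ, HasDerivAt (fun s => y s i * x s j - x s i * y s j) 0 t := by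
    intro t
    have h : HasDerivAt (fun s => y s i * x s j - x s i * y s j)
        (μ t * (τ i * x t i / a i) * x t j + y t i * y t j - (y t i * y t j + x t i * (μ t * (τ j * x t j / a j)))) t := (((hdy t i).mul (hdx t j)).sub ((hdx t i).mul (hdy t j)))
    convert h using 1
    rw [haij, hτij]
    ring
  have hconst := is_const_of_deriv_eq_zero (f := fun s => y s i * x s j - x s i * y s j)
    (fun t => (key t).differentiableAt) (fun t => (key t).deriv)
  exact hconst t₁ t₂
end

section
/- Poisson commutativity of f_i: the functions f_i(x,y) = τ_i y_i² + Σ_{j≠i}(x_i y_j - x_j y_i)²/(τ_j a_i - τ_i a_j) pairwise commute with respect to the pseudo-Euclidean canonical Poisson bracket {f,g} = Σ_i τ_i(∂f/∂x_i · ∂g/∂y_i - ∂f/∂y_i · ∂g/∂x_i) on the constraint submanifold — more precisely, for i ≠ j, the canonical bracket {f_i, f_j} vanishes whenever (A⁻¹x,y) = 0. -/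
open Finset

private lemma deriv_aux0 (C u v d t₀ : ℝ) :
    deriv (fun t => C + (u + v * t) ^ 2 / d) t₀ = 2 * (u + v * t₀) * v / d := by
  have h := ((((hasDerivAt_id t₀).const_mul v).const_add u).pow 2).div_const d
  have h2 : HasDerivAt (fun t => C + (u + v * t) ^ 2 / d)
      (0 + 2 * (u + v * t₀) ^ 1 * (v * 1) / d) t₀ := (hasDerivAt_const t₀ C).add h
  rw [h2.deriv]; ring

private lemma deriv_aux1 {ι : Type*} (s : Finset ι) (u v c : ι → ℝ) (C t₀ : ℝ) :
    deriv (fun t => C + ∑ j ∈ s, (u j + v j * t) ^ 2 / c j) t₀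
      = ∑ j ∈ s, 2 * (u j + v j * t₀) * v j / c j := by
  have key : ∀ m ∈ s, HasDerivAt (fun t => (u m + v m * t) ^ 2 / c m)
      (2 * (u m + v m * t₀) * v m / c m) t₀ := by
    intro m hm
    have h := ((((hasDerivAt_id t₀).const_mul (v m)).const_add (u m)).pow 2).div_const (c m)
    have h' : HasDerivAt (fun t => (u m + v m * t) ^ 2 / c m)
        (2 * (u m + v m * t₀) ^ 1 * (v m * 1) / c m) t₀ := h
    simpa using h'
  have hs : HasDerivAt (fun t => ∑ j ∈ s, (u j + v j * t) ^ 2 / c j)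
      (∑ j ∈ s, 2 * (u j + v j * t₀) * v j / c j) t₀ := HasDerivAt.fun_sum key
  have H : HasDerivAt (fun t => C + ∑ j ∈ s, (u j + v j * t) ^ 2 / c j)
      (0 + ∑ j ∈ s, 2 * (u j + v j * t₀) * v j / c j) t₀ := (hasDerivAt_const t₀ C).add hs
  rw [H.deriv]; ring

private lemma deriv_aux2 {ι : Type*} (s : Finset ι) (u v c : ι → ℝ) (D t₀ : ℝ) :
    deriv (fun t => D * t ^ 2 + ∑ j ∈ s, (u j + v j * t) ^ 2 / c j) t₀
      = 2 * D * t₀ + ∑ j ∈ s, 2 * (u j + v j * t₀) * v j / c j := by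
  have key : ∀ m ∈ s, HasDerivAt (fun t => (u m + v m * t) ^ 2 / c m)
      (2 * (u m + v m * t₀) * v m / c m) t₀ := by
    intro m hm
    have h := ((((hasDerivAt_id t₀).const_mul (v m)).const_add (u m)).pow 2).div_const (c m)
    have h' : HasDerivAt (fun t => (u m + v m * t) ^ 2 / c m)
        (2 * (u m + v m * t₀) ^ 1 * (v m * 1) / c m) t₀ := h
    simpa using h'
  have hs : HasDerivAt (fun t => ∑ j ∈ s, (u j + v j * t) ^ 2 / c j)
      (∑ j ∈ s, 2 * (u j + v j * t₀) * v j / c j) t₀ := HasDerivAt.fun_sum key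
  have H : HasDerivAt (fun t => D * t ^ 2 + ∑ j ∈ s, (u j + v j * t) ^ 2 / c j)
      (D * (2 * t₀ ^ 1 * 1) + ∑ j ∈ s, 2 * (u j + v j * t₀) * v j / c j) t₀ :=
    (((hasDerivAt_id t₀).pow 2).const_mul D).add hs
  rw [H.deriv]; ring

private lemma dx_self (n : ℕ) (a τ : Fin n → ℝ) (x y : Fin n → ℝ) (i : Fin n) :
    deriv (fun t => τ i * y i ^ 2 + ∑ j ∈ univ.erase i,
        (Function.update x i t i * y j - Function.update x i t j * y i) ^ 2
          / (τ j * a i - τ i * a j)) (x i)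
      = ∑ m ∈ univ.erase i, 2 * (x i * y m - x m * y i) * y m / (τ m * a i - τ i * a m) := by
  have hfun : (fun t => τ i * y i ^ 2 + ∑ j ∈ univ.erase i,
        (Function.update x i t i * y j - Function.update x i t j * y i) ^ 2
          / (τ j * a i - τ i * a j))
      = fun t => τ i * y i ^ 2 + ∑ j ∈ univ.erase i,
        (-(x j * y i) + y j * t) ^ 2 / (τ j * a i - τ i * a j) := by
    funext t
    congr 1
    refine Finset.sum_congr rfl fun m hm => ?_
    rw [Function.update_self, Function.update_of_ne (Finset.mem_erase.mp hm).1]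
    ring
  rw [hfun, deriv_aux1]
  exact Finset.sum_congr rfl fun m hm => by ring

private lemma dx_ne (n : ℕ) (a τ : Fin n → ℝ) (x y : Fin n → ℝ) (i k : Fin n) (hki : k ≠ i) :
    deriv (fun t => τ i * y i ^ 2 + ∑ j ∈ univ.erase i,
        (Function.update x k t i * y j - Function.update x k t j * y i) ^ 2
          / (τ j * a i - τ i * a j)) (x k)
      = -(2 * (x i * y k - x k * y i) * y i) / (τ k * a i - τ i * a k) := by
  have hk : k ∈ univ.erase i := Finset.mem_erase.mpr ⟨hki, Finset.mem_univ k⟩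
  have hfun : (fun t => τ i * y i ^ 2 + ∑ j ∈ univ.erase i,
        (Function.update x k t i * y j - Function.update x k t j * y i) ^ 2
          / (τ j * a i - τ i * a j))
      = fun t => (τ i * y i ^ 2 + ∑ j ∈ (univ.erase i).erase k,
          (x i * y j - x j * y i) ^ 2 / (τ j * a i - τ i * a j))
        + (x i * y k + -y i * t) ^ 2 / (τ k * a i - τ i * a k) := by
    funext t
    rw [← Finset.add_sum_erase _ _ hk]
    rw [Finset.sum_congr rfl (fun m hm => by
      rw [Function.update_of_ne (Finset.mem_erase.mp hm).1,
        Function.update_of_ne (Ne.symm hki)])]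
    rw [Function.update_self, Function.update_of_ne (Ne.symm hki)]
    ring
  rw [hfun, deriv_aux0]
  ring

private lemma dy_self (n : ℕ) (a τ : Fin n → ℝ) (x y : Fin n → ℝ) (i : Fin n) :
    deriv (fun t => τ i * Function.update y i t i ^ 2 + ∑ j ∈ univ.erase i,
        (x i * Function.update y i t j - x j * Function.update y i t i) ^ 2
          / (τ j * a i - τ i * a j)) (y i)
      = 2 * τ i * y i
        - ∑ m ∈ univ.erase i, 2 * (x i * y m - x m * y i) * x m / (τ m * a i - τ i * a m) := by
  have hfun : (fun t => τ i * Function.update y i t i ^ 2 + ∑ j ∈ univ.erase i,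
        (x i * Function.update y i t j - x j * Function.update y i t i) ^ 2
          / (τ j * a i - τ i * a j))
      = fun t => τ i * t ^ 2 + ∑ j ∈ univ.erase i,
        (x i * y j + -x j * t) ^ 2 / (τ j * a i - τ i * a j) := by
    funext t
    rw [Finset.sum_congr rfl (fun m hm => by
      rw [Function.update_of_ne (Finset.mem_erase.mp hm).1, Function.update_self])]
    rw [Function.update_self]
    congr 1
    exact Finset.sum_congr rfl fun m hm => by ring
  rw [hfun, deriv_aux2]
  rw [sub_eq_add_neg, ← Finset.sum_neg_distrib]
  congr 1
  exact Finset.sum_congr rfl fun m hm => by ring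

private lemma dy_ne (n : ℕ) (a τ : Fin n → ℝ) (x y : Fin n → ℝ) (i k : Fin n) (hki : k ≠ i) :
    deriv (fun t => τ i * Function.update y k t i ^ 2 + ∑ j ∈ univ.erase i,
        (x i * Function.update y k t j - x j * Function.update y k t i) ^ 2
          / (τ j * a i - τ i * a j)) (y k)
      = 2 * (x i * y k - x k * y i) * x i / (τ k * a i - τ i * a k) := by
  have hk : k ∈ univ.erase i := Finset.mem_erase.mpr ⟨hki, Finset.mem_univ k⟩
  have hfun : (fun t => τ i * Function.update y k t i ^ 2 + ∑ j ∈ univ.erase i,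
        (x i * Function.update y k t j - x j * Function.update y k t i) ^ 2
          / (τ j * a i - τ i * a j))
      = fun t => (τ i * y i ^ 2 + ∑ j ∈ (univ.erase i).erase k,
          (x i * y j - x j * y i) ^ 2 / (τ j * a i - τ i * a j))
        + (-(x k * y i) + x i * t) ^ 2 / (τ k * a i - τ i * a k) := by
    funext t
    rw [← Finset.add_sum_erase _ _ hk]
    rw [Finset.sum_congr rfl (fun m hm => by
      rw [Function.update_of_ne (Finset.mem_erase.mp hm).1,
        Function.update_of_ne (Ne.symm hki)])]
    rw [Function.update_self, Function.update_of_ne (Ne.symm hki)]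
    ring
  rw [hfun, deriv_aux0]
  ring
private lemma three_frac (t1 t2 t3 d1 d2 d3 W : ℝ) (h1 : d1 ≠ 0) (h2 : d2 ≠ 0) (h3 : d3 ≠ 0)
    (key : t3 * d3 + t1 * d2 - t2 * d1 = 0) :
    W * t1 / (d1 * d3) - W * t2 / (d2 * d3) + W * t3 / (d1 * d2) = 0 := by
  have h : W * t1 / (d1 * d3) - W * t2 / (d2 * d3) + W * t3 / (d1 * d2)
      = W * (t3 * d3 + t1 * d2 - t2 * d1) / (d1 * (d2 * d3)) := by
    field_simp
    ring
  rw [h, key, mul_zero, zero_div]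

/-- Poisson commutativity of the integrals `f_i` with respect to the
pseudo-Euclidean canonical bracket
`{f,g} = Σ_k τ_k (∂f/∂x_k ∂g/∂y_k - ∂f/∂y_k ∂g/∂x_k)`,
on the constraint `(A⁻¹x, y) = 0`. -/
theorem integrals_poisson_commute
    (n : ℕ) (a τ : Fin n → ℝ) (ha : ∀ i, a i ≠ 0)
    (hτ : ∀ i, τ i = 1 ∨ τ i = -1)
    (hdist : ∀ i j, i ≠ j → τ i * a i ≠ τ j * a j)
    (f : Fin n → (Fin n → ℝ) → (Fin n → ℝ) → ℝ)
    (hf : ∀ i x y, f i x y = τ i * y i ^ 2 +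
      ∑ j ∈ univ.erase i, (x i * y j - x j * y i) ^ 2 / (τ j * a i - τ i * a j))
    (pdx pdy : ((Fin n → ℝ) → (Fin n → ℝ) → ℝ) →
      Fin n → (Fin n → ℝ) → (Fin n → ℝ) → ℝ)
    (hpdx : ∀ F k x y, pdx F k x y = deriv (fun t => F (Function.update x k t) y) (x k))
    (hpdy : ∀ F k x y, pdy F k x y = deriv (fun t => F x (Function.update y k t)) (y k))
    (i j : Fin n) (hij : i ≠ j)
    (x y : Fin n → ℝ) (hcon : ∑ k, x k * y k / a k = 0) :
    ∑ k, τ k * (pdx (f i) k x y * pdy (f j) k x y -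
      pdy (f i) k x y * pdx (f j) k x y) = 0 := by
  have hτsq : ∀ p, τ p * τ p = 1 := fun p => by
    rcases hτ p with h | h <;> rw [h] <;> norm_num
  have hc : ∀ p q : Fin n, p ≠ q → τ q * a p - τ p * a q ≠ 0 := by
    intro p q hpq h
    apply hdist p q hpq
    rcases hτ p with hp | hp <;> rcases hτ q with hq | hq <;>
      rw [hp, hq] at h ⊢ <;> linarith
  have hji : j ≠ i := Ne.symm hij
  have hjmem : j ∈ univ.erase i := Finset.mem_erase.mpr ⟨hji, Finset.mem_univ j⟩
  have himem : i ∈ univ.erase j := Finset.mem_erase.mpr ⟨hij, Finset.mem_univ i⟩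
  have Pxi : pdx (f i) i x y
      = ∑ m ∈ univ.erase i, 2 * (x i * y m - x m * y i) * y m / (τ m * a i - τ i * a m) := by
    rw [hpdx]; simp only [hf]; exact dx_self n a τ x y i
  have Pyi : pdy (f i) i x y
      = 2 * τ i * y i - ∑ m ∈ univ.erase i,
          2 * (x i * y m - x m * y i) * x m / (τ m * a i - τ i * a m) := by
    rw [hpdy]; simp only [hf]; exact dy_self n a τ x y i
  have Pxn : ∀ k, k ≠ i → pdx (f i) k x y
      = -(2 * (x i * y k - x k * y i) * y i) / (τ k * a i - τ i * a k) := fun k hk => by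
    rw [hpdx]; simp only [hf]; exact dx_ne n a τ x y i k hk
  have Pyn : ∀ k, k ≠ i → pdy (f i) k x y
      = 2 * (x i * y k - x k * y i) * x i / (τ k * a i - τ i * a k) := fun k hk => by
    rw [hpdy]; simp only [hf]; exact dy_ne n a τ x y i k hk
  have Qxj : pdx (f j) j x y
      = ∑ m ∈ univ.erase j, 2 * (x j * y m - x m * y j) * y m / (τ m * a j - τ j * a m) := by
    rw [hpdx]; simp only [hf]; exact dx_self n a τ x y j
  have Qyj : pdy (f j) j x y
      = 2 * τ j * y j - ∑ m ∈ univ.erase j,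
          2 * (x j * y m - x m * y j) * x m / (τ m * a j - τ j * a m) := by
    rw [hpdy]; simp only [hf]; exact dy_self n a τ x y j
  have Qxn : ∀ k, k ≠ j → pdx (f j) k x y
      = -(2 * (x j * y k - x k * y j) * y j) / (τ k * a j - τ j * a k) := fun k hk => by
    rw [hpdx]; simp only [hf]; exact dx_ne n a τ x y j k hk
  have Qyn : ∀ k, k ≠ j → pdy (f j) k x y
      = 2 * (x j * y k - x k * y j) * x j / (τ k * a j - τ j * a k) := fun k hk => by
    rw [hpdy]; simp only [hf]; exact dy_ne n a τ x y j k hk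
  -- split the sum at i and j
  rw [← Finset.add_sum_erase _ _ (Finset.mem_univ i), ← Finset.add_sum_erase _ _ hjmem]
  -- the generic terms
  have h3 : ∀ k ∈ (univ.erase i).erase j,
      τ k * (pdx (f i) k x y * pdy (f j) k x y - pdy (f i) k x y * pdx (f j) k x y)
      = 4 * (x i * y j - x j * y i) * (x i * y k - x k * y i) * (x j * y k - x k * y j) * τ k
          / ((τ k * a i - τ i * a k) * (τ k * a j - τ j * a k)) := by
    intro k hk
    have hkj : k ≠ j := (Finset.mem_erase.mp hk).1
    have hki : k ≠ i := (Finset.mem_erase.mp (Finset.mem_erase.mp hk).2).1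
    rw [Pxn k hki, Pyn k hki, Qxn k hkj, Qyn k hkj]
    have d1 : τ k * a i - τ i * a k ≠ 0 := hc i k (Ne.symm hki)
    have d2 : τ k * a j - τ j * a k ≠ 0 := hc j k (Ne.symm hkj)
    field_simp
    ring
  rw [Finset.sum_congr rfl h3]
  -- the i-term
  have h1 : τ i * (pdx (f i) i x y * pdy (f j) i x y - pdy (f i) i x y * pdx (f j) i x y)
      = (∑ m ∈ (univ.erase i).erase j,
          4 * (x i * y j - x j * y i) * (x i * y m - x m * y i) * (x j * y m - x m * y j) * τ i
            / ((τ m * a i - τ i * a m) * (τ j * a i - τ i * a j)))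
        + -(2 * (τ i * τ i) * y i
            * (-(2 * (x j * y i - x i * y j) * y j) / (τ i * a j - τ j * a i))) := by
    rw [Pxi, Pyi, Qxn i hij, Qyn i hij]
    have e0 : (∑ m ∈ univ.erase i,
        (2 * (x i * y m - x m * y i) * y m / (τ m * a i - τ i * a m)
            * (τ i * (2 * (x j * y i - x i * y j) * x j / (τ i * a j - τ j * a i)))
          + 2 * (x i * y m - x m * y i) * x m / (τ m * a i - τ i * a m)
            * (τ i * (-(2 * (x j * y i - x i * y j) * y j) / (τ i * a j - τ j * a i)))))
        = ∑ m ∈ (univ.erase i).erase j,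
          4 * (x i * y j - x j * y i) * (x i * y m - x m * y i) * (x j * y m - x m * y j) * τ i
            / ((τ m * a i - τ i * a m) * (τ j * a i - τ i * a j)) := by
      rw [← Finset.add_sum_erase _ _ hjmem]
      have hz : 2 * (x i * y j - x j * y i) * y j / (τ j * a i - τ i * a j)
            * (τ i * (2 * (x j * y i - x i * y j) * x j / (τ i * a j - τ j * a i)))
          + 2 * (x i * y j - x j * y i) * x j / (τ j * a i - τ i * a j)
            * (τ i * (-(2 * (x j * y i - x i * y j) * y j) / (τ i * a j - τ j * a i))) = 0 := by
        ring
      rw [hz, zero_add]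
      refine Finset.sum_congr rfl fun m hm => ?_
      have hmj : m ≠ j := (Finset.mem_erase.mp hm).1
      have hmi : m ≠ i := (Finset.mem_erase.mp (Finset.mem_erase.mp hm).2).1
      have d1 : τ m * a i - τ i * a m ≠ 0 := hc i m (Ne.symm hmi)
      have d3 : τ j * a i - τ i * a j ≠ 0 := hc i j hij
      have e3 : τ i * a j - τ j * a i ≠ 0 := hc j i hji
      field_simp
      rw [show (a i * τ j - τ i * a j) = -(τ i * a j - a i * τ j) by ring, div_neg]
      ring
    rw [← e0, Finset.sum_add_distrib, ← Finset.sum_mul, ← Finset.sum_mul]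
    ring
  -- the j-term
  have h2 : τ j * (pdx (f i) j x y * pdy (f j) j x y - pdy (f i) j x y * pdx (f j) j x y)
      = (∑ m ∈ (univ.erase i).erase j,
          -(4 * (x i * y j - x j * y i) * (x i * y m - x m * y i) * (x j * y m - x m * y j) * τ j
            / ((τ m * a j - τ j * a m) * (τ j * a i - τ i * a j))))
        + 2 * (τ j * τ j) * y j
            * (-(2 * (x i * y j - x j * y i) * y i) / (τ j * a i - τ i * a j)) := by
    rw [Qxj, Qyj, Pxn j hji, Pyn j hji]
    have e0 : (∑ m ∈ univ.erase j,
        (2 * (x j * y m - x m * y j) * x m / (τ m * a j - τ j * a m)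
            * -(τ j * (-(2 * (x i * y j - x j * y i) * y i) / (τ j * a i - τ i * a j)))
          + 2 * (x j * y m - x m * y j) * y m / (τ m * a j - τ j * a m)
            * -(τ j * (2 * (x i * y j - x j * y i) * x i / (τ j * a i - τ i * a j)))))
        = ∑ m ∈ (univ.erase i).erase j,
          -(4 * (x i * y j - x j * y i) * (x i * y m - x m * y i) * (x j * y m - x m * y j) * τ j
            / ((τ m * a j - τ j * a m) * (τ j * a i - τ i * a j))) := by
      rw [← Finset.add_sum_erase _ _ himem]
      have hz : 2 * (x j * y i - x i * y j) * x i / (τ i * a j - τ j * a i)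
            * -(τ j * (-(2 * (x i * y j - x j * y i) * y i) / (τ j * a i - τ i * a j)))
          + 2 * (x j * y i - x i * y j) * y i / (τ i * a j - τ j * a i)
            * -(τ j * (2 * (x i * y j - x j * y i) * x i / (τ j * a i - τ i * a j))) = 0 := by
        ring
      rw [hz, zero_add, Finset.erase_right_comm]
      refine Finset.sum_congr rfl fun m hm => ?_
      have hmj : m ≠ j := (Finset.mem_erase.mp hm).1
      have hmi : m ≠ i := (Finset.mem_erase.mp (Finset.mem_erase.mp hm).2).1
      have d2 : τ m * a j - τ j * a m ≠ 0 := hc j m (Ne.symm hmj)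
      have d3 : τ j * a i - τ i * a j ≠ 0 := hc i j hij
      field_simp
      ring
    rw [← e0, Finset.sum_add_distrib, ← Finset.sum_mul, ← Finset.sum_mul]
    ring
  rw [h1, h2]
  -- the constant terms cancel
  have hK : -(2 * (τ i * τ i) * y i
        * (-(2 * (x j * y i - x i * y j) * y j) / (τ i * a j - τ j * a i)))
      + 2 * (τ j * τ j) * y j
        * (-(2 * (x i * y j - x j * y i) * y i) / (τ j * a i - τ i * a j)) = 0 := by
    rw [hτsq i, hτsq j]
    have d3 : τ j * a i - τ i * a j ≠ 0 := hc i j hij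
    have e3 : τ i * a j - τ j * a i ≠ 0 := hc j i hji
    field_simp
    ring
  -- the sums cancel termwise
  have hS : (∑ m ∈ (univ.erase i).erase j,
        4 * (x i * y j - x j * y i) * (x i * y m - x m * y i) * (x j * y m - x m * y j) * τ i
          / ((τ m * a i - τ i * a m) * (τ j * a i - τ i * a j)))
      + (∑ m ∈ (univ.erase i).erase j,
          -(4 * (x i * y j - x j * y i) * (x i * y m - x m * y i) * (x j * y m - x m * y j) * τ j
            / ((τ m * a j - τ j * a m) * (τ j * a i - τ i * a j))))
      + ∑ m ∈ (univ.erase i).erase j,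
          4 * (x i * y j - x j * y i) * (x i * y m - x m * y i) * (x j * y m - x m * y j) * τ m
            / ((τ m * a i - τ i * a m) * (τ m * a j - τ j * a m)) = 0 := by
    rw [← Finset.sum_add_distrib, ← Finset.sum_add_distrib]
    refine Finset.sum_eq_zero fun m hm => ?_
    have hmj : m ≠ j := (Finset.mem_erase.mp hm).1
    have hmi : m ≠ i := (Finset.mem_erase.mp (Finset.mem_erase.mp hm).2).1
    have d1 : τ m * a i - τ i * a m ≠ 0 := hc i m (Ne.symm hmi)
    have d2 : τ m * a j - τ j * a m ≠ 0 := hc j m (Ne.symm hmj)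
    have d3 : τ j * a i - τ i * a j ≠ 0 := hc i j hij
    have key : τ m * (τ j * a i - τ i * a j) + τ i * (τ m * a j - τ j * a m)
        - τ j * (τ m * a i - τ i * a m) = 0 := by ring
    linear_combination three_frac (τ i) (τ j) (τ m) (τ m * a i - τ i * a m)
      (τ m * a j - τ j * a m) (τ j * a i - τ i * a j)
      (4 * (x i * y j - x j * y i) * (x i * y m - x m * y i) * (x j * y m - x m * y j))
      d1 d2 d3 key
  linear_combination hS + hK
end

section
/- If a line l_k determined by a billiard segment is tangent to a pseudo-confocal quadric Q_{λ*}, then all subsequent segments are tangent to Q_{λ*}: tangency, expressed as det L_{x_j,y_j}(λ*) = 0, propagates to all iterates of the billiard map. -/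
open Finset

/-- One step of the billiard map preserves the tangency determinant. -/
lemma billiard_step_lemma {n : ℕ} (a τ : Fin n → ℝ) (ha : ∀ i, a i ≠ 0)
    (hτ : ∀ i, τ i = 1 ∨ τ i = -1) (lam : ℝ) (hD : ∀ i, lam - τ i * a i ≠ 0)
    (X Y0 X' Y' : Fin n → ℝ) (t s : ℝ)
    (hX'on : ∑ i, X' i * X' i / a i = 1)
    (hP : (∑ i, τ i * X' i * X' i / (a i * a i)) ≠ 0)
    (hs : s = 2 * ((∑ m, X' m * Y' m / a m) / (∑ m, τ m * X' m * X' m / (a m * a m))))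
    (hX' : ∀ i, X' i = X i - t * Y0 i)
    (hY' : ∀ i, Y' i = Y0 i + s * (τ i * X' i / a i))
    (hF : (∑ i, τ i * Y0 i * Y0 i / (lam - τ i * a i)) *
        (1 + ∑ i, τ i * X i * X i / (lam - τ i * a i)) -
      (∑ i, τ i * X i * Y0 i / (lam - τ i * a i)) ^ 2 = 0) :
    (∑ i, τ i * Y' i * Y' i / (lam - τ i * a i)) *
        (1 + ∑ i, τ i * X' i * X' i / (lam - τ i * a i)) -
      (∑ i, τ i * X' i * Y' i / (lam - τ i * a i)) ^ 2 = 0 := by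
  -- Step A : the determinant for (X', Y0) equals the one for (X, Y0).
  have e3 : (∑ i, τ i * X' i * X' i / (lam - τ i * a i))
      = (∑ i, τ i * X i * X i / (lam - τ i * a i))
        + (-(2*t)) * (∑ i, τ i * X i * Y0 i / (lam - τ i * a i))
        + t^2 * (∑ i, τ i * Y0 i * Y0 i / (lam - τ i * a i)) := by
    rw [Finset.mul_sum, Finset.mul_sum, ← Finset.sum_add_distrib, ← Finset.sum_add_distrib]
    refine Finset.sum_congr rfl fun i _ => ?_
    rw [hX' i]; ring
  have e4 : (∑ i, τ i * X' i * Y0 i / (lam - τ i * a i))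
      = (∑ i, τ i * X i * Y0 i / (lam - τ i * a i))
        + (-t) * (∑ i, τ i * Y0 i * Y0 i / (lam - τ i * a i)) := by
    rw [Finset.mul_sum, ← Finset.sum_add_distrib]
    refine Finset.sum_congr rfl fun i _ => ?_
    rw [hX' i]; ring
  have hFA : (∑ i, τ i * Y0 i * Y0 i / (lam - τ i * a i)) *
      (1 + ∑ i, τ i * X' i * X' i / (lam - τ i * a i)) -
      (∑ i, τ i * X' i * Y0 i / (lam - τ i * a i)) ^ 2 = 0 := by
    rw [e3, e4]; linear_combination hF
  -- Expand the goal sums in terms of atomic sums.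
  have eYY : (∑ i, τ i * Y' i * Y' i / (lam - τ i * a i))
      = (∑ i, τ i * Y0 i * Y0 i / (lam - τ i * a i))
        + (2*s) * (∑ i, τ i * Y0 i * (τ i * X' i / a i) / (lam - τ i * a i))
        + s^2 * (∑ i, τ i * (τ i * X' i / a i) * (τ i * X' i / a i) / (lam - τ i * a i)) := by
    rw [Finset.mul_sum, Finset.mul_sum, ← Finset.sum_add_distrib, ← Finset.sum_add_distrib]
    refine Finset.sum_congr rfl fun i _ => ?_
    rw [hY' i]; ring
  have eXY : (∑ i, τ i * X' i * Y' i / (lam - τ i * a i))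
      = (∑ i, τ i * X' i * Y0 i / (lam - τ i * a i))
        + s * (∑ i, τ i * X' i * (τ i * X' i / a i) / (lam - τ i * a i)) := by
    rw [Finset.mul_sum, ← Finset.sum_add_distrib]
    refine Finset.sum_congr rfl fun i _ => ?_
    rw [hY' i]; ring
  -- the Q-relations
  have hQexp : (∑ m, X' m * Y' m / a m)
      = (∑ i, X' i * Y0 i / a i) + s * (∑ i, τ i * X' i * X' i / (a i * a i)) := by
    rw [Finset.mul_sum, ← Finset.sum_add_distrib]
    refine Finset.sum_congr rfl fun i _ => ?_
    rw [hY' i]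
    rcases hτ i with h | h <;> rw [h] <;> field_simp [ha i] <;> ring
  have hsP : s * (∑ i, τ i * X' i * X' i / (a i * a i)) = 2 * (∑ m, X' m * Y' m / a m) := by
    rw [hs, mul_assoc, div_mul_cancel₀ _ hP]
  have h2CsP : 2 * (∑ i, X' i * Y0 i / a i)
      + s * (∑ i, τ i * X' i * X' i / (a i * a i)) = 0 := by
    linear_combination (-2 : ℝ) * hQexp - hsP
  have hτc : ∀ i : Fin n, (τ i = 1 ∧ lam - a i ≠ 0) ∨ (τ i = -1 ∧ lam + a i ≠ 0) := by
    intro i; rcases hτ i with h | h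
    · exact Or.inl ⟨h, by have := hD i; rwa [h, one_mul] at this⟩
    · refine Or.inr ⟨h, ?_⟩
      have := hD i; rw [h] at this
      rwa [neg_one_mul, sub_neg_eq_add] at this
  -- lambda-identities
  have hw1 : lam * (∑ i, τ i * X' i * (τ i * X' i / a i) / (lam - τ i * a i))
      = 1 + (∑ i, τ i * X' i * X' i / (lam - τ i * a i)) := by
    rw [Finset.mul_sum, ← hX'on, ← Finset.sum_add_distrib]
    refine Finset.sum_congr rfl fun i _ => ?_
    rcases hτc i with ⟨h, d⟩ | ⟨h, d⟩ <;> rw [h] <;> field_simp [ha i, d] <;> ring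
  have hw2 : lam * (∑ i, τ i * Y0 i * (τ i * X' i / a i) / (lam - τ i * a i))
      = (∑ i, X' i * Y0 i / a i) + (∑ i, τ i * X' i * Y0 i / (lam - τ i * a i)) := by
    rw [Finset.mul_sum, ← Finset.sum_add_distrib]
    refine Finset.sum_congr rfl fun i _ => ?_
    rcases hτc i with ⟨h, d⟩ | ⟨h, d⟩ <;> rw [h] <;> field_simp [ha i, d] <;> ring
  have hw3 : lam * (lam * (∑ i, τ i * (τ i * X' i / a i) * (τ i * X' i / a i) / (lam - τ i * a i)))
      = lam * (∑ i, τ i * X' i * X' i / (a i * a i))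
        + (1 + (∑ i, τ i * X' i * X' i / (lam - τ i * a i))) := by
    rw [Finset.mul_sum, Finset.mul_sum, Finset.mul_sum, ← hX'on,
      ← Finset.sum_add_distrib, ← Finset.sum_add_distrib]
    refine Finset.sum_congr rfl fun i _ => ?_
    rcases hτc i with ⟨h, d⟩ | ⟨h, d⟩ <;> rw [h] <;> field_simp [ha i, d] <;> ring
  -- now set the atoms
  rw [eYY, eXY]
  set YY := ∑ i, τ i * Y0 i * Y0 i / (lam - τ i * a i) with hYYdef
  set XX := ∑ i, τ i * X' i * X' i / (lam - τ i * a i) with hXXdef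
  set K := ∑ i, τ i * X' i * Y0 i / (lam - τ i * a i) with hKdef
  set U := ∑ i, τ i * X' i * (τ i * X' i / a i) / (lam - τ i * a i) with hUdef
  set V := ∑ i, τ i * Y0 i * (τ i * X' i / a i) / (lam - τ i * a i) with hVdef
  set W := ∑ i, τ i * (τ i * X' i / a i) * (τ i * X' i / a i) / (lam - τ i * a i) with hWdef
  set C := ∑ i, X' i * Y0 i / a i with hCdef
  set P := ∑ i, τ i * X' i * X' i / (a i * a i) with hPdef
  by_cases hl : lam = 0
  · subst hl
    have hu : U = -P := by
      rw [hUdef, hPdef, ← Finset.sum_neg_distrib]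
      refine Finset.sum_congr rfl fun i _ => ?_
      rcases hτ i with h | h <;> rw [h] <;> field_simp [ha i] <;> ring
    have hKC : K = -C := by
      rw [hKdef, hCdef, ← Finset.sum_neg_distrib]
      refine Finset.sum_congr rfl fun i _ => ?_
      rcases hτ i with h | h <;> rw [h] <;>
        rw [zero_sub] <;> field_simp [ha i]
    have hB : XX = -1 := by linear_combination -hw1
    have hK2 : K ^ 2 = 0 := by linear_combination -hFA + YY * hB
    have hK0 : K = 0 := by
      have h2 : K * K = 0 := by linear_combination hK2
      exact mul_self_eq_zero.mp h2
    have hC0 : C = 0 := by linear_combination hKC - hK0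
    have hsP0 : s * P = 0 := by linear_combination -hsP - 2 * hQexp - 2 * hC0
    linear_combination (YY + 2*s*V + s^2*W) * hB - (K + s*U) * hK0
      - (s*(K + s*U)) * hu + (K + s*U) * hsP0
  · have key : lam^2 * ((YY + 2*s*V + s^2*W) * (1 + XX) - (K + s*U)^2) = 0 := by
      linear_combination (lam^2) * hFA + (2*s*lam*(1+XX)) * hw2 + (s^2*(1+XX)) * hw3
        + (-2*s*lam*K - s^2*(lam*U + (1+XX))) * hw1 + (s*lam*(1+XX)) * h2CsP
    rcases mul_eq_zero.mp key with h | h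
    · exact absurd h (pow_ne_zero 2 hl)
    · exact h


/-- Tangency to a fixed pseudo-confocal quadric `Q_{λ*}` (expressed as
`det L_{x_j,y_j}(λ*) = 0`) propagates from the initial segment to all iterates
of the billiard map within an ellipsoid. -/
theorem billiard_tangency_propagates
    (n : ℕ) (a τ : Fin n → ℝ) (ha : ∀ i, 0 < a i)
    (hτ : ∀ i, τ i = 1 ∨ τ i = -1)
    (x y : ℕ → Fin n → ℝ)
    (hx : ∀ j, ∑ i, x j i * x j i / a i = 1)
    (hyy : ∀ j, ∑ i, y j i * y j i / a i ≠ 0)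
    (hE : ∀ j, ∑ i, τ i * x j i * x j i / (a i * a i) ≠ 0)
    (hstep1 : ∀ j i, x (j + 1) i =
      x j i - 2 * ((∑ m, x j m * y j m / a m) / (∑ m, y j m * y j m / a m)) * y j i)
    (hstep2 : ∀ j i, y (j + 1) i =
      y j i + 2 * ((∑ m, x (j + 1) m * y (j + 1) m / a m) /
        (∑ m, τ m * x (j + 1) m * x (j + 1) m / (a m * a m)))
        * (τ i * x (j + 1) i / a i))
    (lam : ℝ) (hlam : ∀ i, lam ≠ τ i * a i)
    (h0 : (∑ i, τ i * y 0 i * y 0 i / (lam - τ i * a i)) *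
        (1 + ∑ i, τ i * x 0 i * x 0 i / (lam - τ i * a i)) -
      (∑ i, τ i * x 0 i * y 0 i / (lam - τ i * a i)) ^ 2 = 0) :
    ∀ j : ℕ, (∑ i, τ i * y j i * y j i / (lam - τ i * a i)) *
        (1 + ∑ i, τ i * x j i * x j i / (lam - τ i * a i)) -
      (∑ i, τ i * x j i * y j i / (lam - τ i * a i)) ^ 2 = 0 := by
  have ha' : ∀ i, a i ≠ 0 := fun i => (ha i).ne'
  have hD : ∀ i, lam - τ i * a i ≠ 0 := fun i => sub_ne_zero.mpr (hlam i)
  intro j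
  induction j with
  | zero => exact h0
  | succ j ih =>
    exact billiard_step_lemma a τ ha' hτ lam hD (x j) (y j) (x (j + 1)) (y (j + 1)) _ _
      (hx (j + 1)) (hE (j + 1)) rfl (hstep1 j) (hstep2 j) ih
end

section
/- The sum of block integrals gives the Hamiltonian: Σ_{s=1}^r f̃_s = ⟨y,y⟩ = Σ_i τ_i y_i², where f̃_s = Σ_{i∈I_s}(τ_i y_i² + Σ_{j∉I_s}(x_i y_j - x_j y_i)²/(τ_j a_i - τ_i a_j)). -/
open Finset

/-- The sum of the block integrals gives the Hamiltonian:
`Σ_s f̃_s = ⟨y,y⟩ = Σ_i τ_i y_i²`. -/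
theorem sum_block_integrals_eq_hamiltonian
    (n r : ℕ) (a τ : Fin n → ℝ) (ha : ∀ i, a i ≠ 0)
    (hτ : ∀ i, τ i = 1 ∨ τ i = -1)
    (b : Fin n → Fin r) (α : Fin r → ℝ) (hα : Function.Injective α)
    (hblock : ∀ i, τ i * a i = α (b i))
    (x y : Fin n → ℝ) :
    ∑ s : Fin r,
      ∑ i ∈ univ.filter fun i => b i = s, (τ i * y i ^ 2 +
        ∑ j ∈ univ.filter fun j => b j ≠ s,
          (x i * y j - x j * y i) ^ 2 / (τ j * a i - τ i * a j)) =
    ∑ i, τ i * y i ^ 2 := by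
  set g : Fin n → Fin n → ℝ :=
    fun i j => (x i * y j - x j * y i) ^ 2 / (τ j * a i - τ i * a j) with hg
  have hanti : ∀ i j, g j i = -g i j := by
    intro i j
    simp only [hg]
    rw [show (x j * y i - x i * y j) ^ 2 = (x i * y j - x j * y i) ^ 2 by ring,
      show τ i * a j - τ j * a i = -(τ j * a i - τ i * a j) by ring, div_neg]
  have step1 : (∑ s : Fin r,
      ∑ i ∈ univ.filter fun i => b i = s, (τ i * y i ^ 2 +
        ∑ j ∈ univ.filter fun j => b j ≠ s, g i j)) =
      ∑ i, (τ i * y i ^ 2 + ∑ j ∈ univ.filter fun j => b j ≠ b i, g i j) := by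
    rw [← Finset.sum_fiberwise univ b
      (fun i => τ i * y i ^ 2 + ∑ j ∈ univ.filter fun j => b j ≠ b i, g i j)]
    refine Finset.sum_congr rfl fun s _ => Finset.sum_congr rfl fun i hi => ?_
    simp only [mem_filter] at hi
    rw [hi.2]
  rw [step1, Finset.sum_add_distrib]
  have hT : (∑ i, ∑ j ∈ univ.filter fun j => b j ≠ b i, g i j) = 0 := by
    have h2 : (∑ i, ∑ j ∈ univ.filter fun j => b j ≠ b i, g i j) =
        -∑ i, ∑ j ∈ univ.filter fun j => b j ≠ b i, g i j := by
      conv_lhs => rw [show (∑ i, ∑ j ∈ univ.filter fun j => b j ≠ b i, g i j) =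
        ∑ i, ∑ j, if b j ≠ b i then g i j else 0 by
          refine Finset.sum_congr rfl fun i _ => Finset.sum_filter _ _]
      rw [Finset.sum_comm]
      rw [← Finset.sum_neg_distrib]
      refine Finset.sum_congr rfl fun i _ => ?_
      rw [← Finset.sum_neg_distrib, Finset.sum_filter]
      refine Finset.sum_congr rfl fun j _ => ?_
      by_cases h : b j = b i
      · simp [h]
      · rw [if_pos (fun e => h e.symm), if_pos h, hanti]
    linarith
  rw [hT, add_zero]
end
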